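/- Let T be a measure-preserving map of a probability space (X, 𝒜, μ), A ∈ 𝒜 of positive measure, and τ : X → ℕ₀ measurable. Then for every point x with φ_A(x) > τ(x), the normalized hitting-time sequences satisfy d(μ(A)·Φ_A(T^{τ(x)}x), μ(A)·Φ_A(x)) ≤ τ(x)·μ(A), where d is the product metric on [0,∞]^ℕ₀ built from d(s,t) = |e^{−s} − e^{−t}|. Consequently, if (A_l) is a sequence of sets, (ν_l) probability measures, and τ_l measurable with μ(A_l)·τ_l → 0 in ν_l-probability and ν_l(τ_l < φ_{A_l}) → 1, then d(μ(A_l)Φ_{A_l}∘T^{τ_l}, μ(A_l)Φ_{A_l}) → 0 in ν_l-probability. -/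

import Mathlib

open MeasureTheory Filter Topology Set

/-- First hitting time of `A` under `T`. -/
noncomputable def hit {X : Type*} (T : X → X) (A : Set X) (x : X) : ℕ :=
  sInf {n : ℕ | 1 ≤ n ∧ T^[n] x ∈ A}

/-- The first entrance map `T_A x := T^{φ_A(x)} x`. -/
noncomputable def ret {X : Type*} (T : X → X) (A : Set X) (x : X) : X :=
  T^[hit T A x] x

/-- The `j`-th entry `φ_A(T_A^j x)` of the hitting-time process `Φ_A`. -/
noncomputable def hitOrbit {X : Type*} (T : X → X) (A : Set X) (x : X) (j : ℕ) : ℕ :=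
  hit T A ((ret T A)^[j] x)

lemma hit_shift {X : Type*} (T : X → X) (A : Set X) (x : X) {m : ℕ}
    (hm : m < hit T A x) : hit T A (T^[m] x) = hit T A x - m := by
  have hne : {n : ℕ | 1 ≤ n ∧ T^[n] x ∈ A}.Nonempty := by
    by_contra h
    rw [Set.not_nonempty_iff_eq_empty] at h
    have h0 : hit T A x = 0 := by rw [hit, h, Nat.sInf_empty]
    omega
  have hmem : hit T A x ∈ {n : ℕ | 1 ≤ n ∧ T^[n] x ∈ A} := Nat.sInf_mem hne
  have key : ∀ n, T^[n] (T^[m] x) = T^[n + m] x := by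
    intro n; rw [Function.iterate_add_apply]
  apply le_antisymm
  · apply Nat.sInf_le
    exact ⟨by omega, by rw [key, Nat.sub_add_cancel hm.le]; exact hmem.2⟩
  · have hne' : {n : ℕ | 1 ≤ n ∧ T^[n] (T^[m] x) ∈ A}.Nonempty :=
      ⟨hit T A x - m, ⟨by omega, by rw [key, Nat.sub_add_cancel hm.le]; exact hmem.2⟩⟩
    have h2 : hit T A (T^[m] x) ∈ {n : ℕ | 1 ≤ n ∧ T^[n] (T^[m] x) ∈ A} :=
      Nat.sInf_mem hne'
    have h3 : hit T A x ≤ hit T A (T^[m] x) + m := by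
      apply Nat.sInf_le
      exact ⟨by have := h2.1; omega, by rw [← key]; exact h2.2⟩
    omega

lemma hitOrbit_shift {X : Type*} (T : X → X) (A : Set X) (x : X) {m : ℕ}
    (hm : m < hit T A x) (j : ℕ) (hj : j ≠ 0) :
    hitOrbit T A (T^[m] x) j = hitOrbit T A x j := by
  obtain ⟨j', rfl⟩ := Nat.exists_eq_succ_of_ne_zero hj
  have hret : ret T A (T^[m] x) = ret T A x := by
    unfold ret
    rw [hit_shift T A x hm, ← Function.iterate_add_apply, Nat.sub_add_cancel hm.le]
  unfold hitOrbit
  rw [Function.iterate_succ_apply, Function.iterate_succ_apply, hret]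

lemma exp_diff_le {s δ : ℝ} (hs : 0 ≤ s) (hδ : 0 ≤ δ) :
    |Real.exp (-s) - Real.exp (-(s + δ))| ≤ δ := by
  have h1 : Real.exp (-(s + δ)) ≤ Real.exp (-s) := Real.exp_le_exp.2 (by linarith)
  rw [abs_of_nonneg (by linarith)]
  have h2 : Real.exp (-s) ≤ 1 := Real.exp_le_one_iff.2 (by linarith)
  have h3 : 1 - δ ≤ Real.exp (-δ) := by
    have := Real.add_one_le_exp (-δ); linarith
  have h4 : Real.exp (-(s + δ)) = Real.exp (-s) * Real.exp (-δ) := by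
    rw [← Real.exp_add]; ring_nf
  have h5 : 0 < Real.exp (-s) := Real.exp_pos _
  nlinarith

lemma measurable_hit {X : Type*} [MeasurableSpace X] {T : X → X} {A : Set X}
    (hT : Measurable T) (hA : MeasurableSet A) : Measurable (hit T A) := by
  apply measurable_to_countable'
  intro n
  have hk : ∀ k, MeasurableSet {x | T^[k] x ∈ A} := fun k => (hT.iterate k) hA
  have : hit T A ⁻¹' {n} =
      ({x : X | ∀ k, ¬(1 ≤ k ∧ T^[k] x ∈ A)} ∩ {x | n = 0}) ∪
      ({x : X | 1 ≤ n ∧ T^[n] x ∈ A} ∩ {x | ∀ k < n, ¬(1 ≤ k ∧ T^[k] x ∈ A)}) := by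
    ext x
    simp only [Set.mem_preimage, Set.mem_singleton_iff, Set.mem_union, Set.mem_inter_iff,
      Set.mem_setOf_eq]
    constructor
    · rintro rfl
      by_cases hne : {k : ℕ | 1 ≤ k ∧ T^[k] x ∈ A}.Nonempty
      · exact Or.inr ⟨Nat.sInf_mem hne, fun k hk' => Nat.notMem_of_lt_sInf hk'⟩
      · left
        rw [Set.not_nonempty_iff_eq_empty] at hne
        refine ⟨fun k hk' => by simp [Set.eq_empty_iff_forall_notMem] at hne; exact hne k hk'.1 hk'.2, ?_⟩
        simp [hit, hne]
    · rintro (⟨h1, rfl⟩ | ⟨h1, h2⟩)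
      · simp only [hit]
        convert Nat.sInf_empty
        rw [Set.eq_empty_iff_forall_notMem]; exact h1
      · have hle : hit T A x ≤ n := Nat.sInf_le h1
        rcases lt_or_eq_of_le hle with h | h
        · have hmem : hit T A x ∈ {k : ℕ | 1 ≤ k ∧ T^[k] x ∈ A} := Nat.sInf_mem ⟨n, h1⟩
          exact absurd hmem (h2 _ h)
        · exact h
  rw [this]
  apply MeasurableSet.union
  · apply MeasurableSet.inter
    · have : {x : X | ∀ k, ¬(1 ≤ k ∧ T^[k] x ∈ A)} = ⋂ k, {x | ¬(1 ≤ k ∧ T^[k] x ∈ A)} := by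
        ext x; simp
      rw [this]
      apply MeasurableSet.iInter
      intro k
      by_cases h1 : 1 ≤ k
      · have : {x : X | ¬(1 ≤ k ∧ T^[k] x ∈ A)} = {x | T^[k] x ∈ A}ᶜ := by
          ext x; simp [h1]
        rw [this]; exact (hk k).compl
      · have : {x : X | ¬(1 ≤ k ∧ T^[k] x ∈ A)} = Set.univ := by
          ext x; simp [h1]
        rw [this]; exact MeasurableSet.univ
    · by_cases h : n = 0 <;> simp [h]
  · apply MeasurableSet.inter
    · by_cases h1 : 1 ≤ n
      · have : {x : X | 1 ≤ n ∧ T^[n] x ∈ A} = {x | T^[n] x ∈ A} := by ext x; simp [h1]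
        rw [this]; exact hk n
      · have : {x : X | 1 ≤ n ∧ T^[n] x ∈ A} = ∅ := by ext x; simp [h1]
        rw [this]; exact MeasurableSet.empty
    · have : {x : X | ∀ k < n, ¬(1 ≤ k ∧ T^[k] x ∈ A)} =
          ⋂ k ∈ Set.Iio n, {x | ¬(1 ≤ k ∧ T^[k] x ∈ A)} := by ext x; simp
      rw [this]
      apply MeasurableSet.biInter (Set.to_countable _)
      intro k _
      by_cases h1 : 1 ≤ k
      · have : {x : X | ¬(1 ≤ k ∧ T^[k] x ∈ A)} = {x | T^[k] x ∈ A}ᶜ := by ext x; simp [h1]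
        rw [this]; exact (hk k).compl
      · have : {x : X | ¬(1 ≤ k ∧ T^[k] x ∈ A)} = Set.univ := by ext x; simp [h1]
        rw [this]; exact MeasurableSet.univ

lemma part1 {X : Type*} [MeasurableSpace X] (μ : Measure X)
    (T : X → X) (A : Set X) (τ : X → ℕ) (x : X) (hlt : τ x < hit T A x) :
    (∑' j : ℕ, (2 : ℝ)⁻¹ ^ (j + 1) *
        |Real.exp (-((μ A).toReal * (hitOrbit T A (T^[τ x] x) j : ℝ)))
          - Real.exp (-((μ A).toReal * (hitOrbit T A x j : ℝ)))|)
      ≤ (τ x : ℝ) * (μ A).toReal := by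
  set a : ℝ := (μ A).toReal with ha
  have ha0 : 0 ≤ a := ENNReal.toReal_nonneg
  set m := τ x with hmdef
  set h := hit T A x with hhdef
  have hsum : (∑' j : ℕ, (2 : ℝ)⁻¹ ^ (j + 1) *
      |Real.exp (-(a * (hitOrbit T A (T^[m] x) j : ℝ)))
        - Real.exp (-(a * (hitOrbit T A x j : ℝ)))|)
      = (2 : ℝ)⁻¹ ^ 1 *
        |Real.exp (-(a * ((h - m : ℕ) : ℝ))) - Real.exp (-(a * (h : ℝ)))| := by
    rw [tsum_eq_single 0 ?_]
    · rw [show hitOrbit T A (T^[m] x) 0 = h - m from hit_shift T A x hlt,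
        show hitOrbit T A x 0 = h from rfl]
    · intro j hj
      rw [hitOrbit_shift T A x hlt j hj]
      simp
  rw [hsum]
  have hcast : ((h - m : ℕ) : ℝ) = (h : ℝ) - (m : ℝ) := by
    rw [Nat.cast_sub hlt.le]
  have hbound : |Real.exp (-(a * ((h - m : ℕ) : ℝ))) - Real.exp (-(a * (h : ℝ)))|
      ≤ a * m := by
    have := exp_diff_le (s := a * ((h - m : ℕ) : ℝ)) (δ := a * m)
      (by positivity) (by positivity)
    have heq : a * ((h - m : ℕ) : ℝ) + a * m = a * (h : ℝ) := by
      rw [hcast]; ring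
    rwa [heq] at this
  have habs : 0 ≤ |Real.exp (-(a * ((h - m : ℕ) : ℝ))) - Real.exp (-(a * (h : ℝ)))| :=
    abs_nonneg _
  have : (2 : ℝ)⁻¹ ^ 1 * |Real.exp (-(a * ((h - m : ℕ) : ℝ))) - Real.exp (-(a * (h : ℝ)))|
      ≤ (2 : ℝ)⁻¹ * (a * m) := by
    rw [pow_one]
    apply mul_le_mul_of_nonneg_left hbound (by norm_num)
  refine this.trans ?_
  nlinarith [mul_nonneg ha0 (Nat.cast_nonneg m : (0:ℝ) ≤ m)]

/-- Admissible delays for hitting-time processes: whenever `φ_A(x) > τ(x)`, the product-metric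
distance between `μ(A)·Φ_A(T^{τ(x)}x)` and `μ(A)·Φ_A(x)` is at most `τ(x)·μ(A)`.
Consequently, if `μ(A_l)·τ_l → 0` in `ν_l`-probability and `ν_l(τ_l < φ_{A_l}) → 1`, then
`d(μ(A_l)Φ_{A_l}∘T^{τ_l}, μ(A_l)Φ_{A_l}) → 0` in `ν_l`-probability. -/
theorem stmt19 {X : Type*} [MeasurableSpace X] (μ : Measure X) [IsProbabilityMeasure μ]
    (T : X → X) (hT : MeasurePreserving T μ μ) :
    (∀ (A : Set X) (τ : X → ℕ) (x : X), τ x < hit T A x →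
      (∑' j : ℕ, (2 : ℝ)⁻¹ ^ (j + 1) *
          |Real.exp (-((μ A).toReal * (hitOrbit T A (T^[τ x] x) j : ℝ)))
            - Real.exp (-((μ A).toReal * (hitOrbit T A x j : ℝ)))|)
        ≤ (τ x : ℝ) * (μ A).toReal) ∧
    ∀ (A : ℕ → Set X) (ν : ℕ → Measure X) (τ : ℕ → X → ℕ),
      (∀ l, MeasurableSet (A l)) → (∀ l, IsProbabilityMeasure (ν l)) →
      (∀ l, Measurable (τ l)) →
      (∀ ε > (0 : ℝ),
        Tendsto (fun l => ν l {x | ε ≤ (μ (A l)).toReal * (τ l x : ℝ)}) atTop (𝓝 0)) →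
      Tendsto (fun l => ν l {x | τ l x < hit T (A l) x}) atTop (𝓝 1) →
      ∀ ε > (0 : ℝ), Tendsto (fun l => ν l {x |
          ε ≤ ∑' j : ℕ, (2 : ℝ)⁻¹ ^ (j + 1) *
            |Real.exp (-((μ (A l)).toReal * (hitOrbit T (A l) (T^[τ l x] x) j : ℝ)))
              - Real.exp (-((μ (A l)).toReal * (hitOrbit T (A l) x j : ℝ)))|})
        atTop (𝓝 0) := by
  constructor
  · exact fun A τ x hx => part1 μ T A τ x hx
  · intro A ν τ hA hν hτ hsmall hgood ε hε
    -- the good set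
    set s : ℕ → Set X := fun l => {x | τ l x < hit T (A l) x} with hs
    have hsm : ∀ l, MeasurableSet (s l) := by
      intro l
      exact measurableSet_lt (hτ l) (measurable_hit hT.measurable (hA l))
    have hcompl : Tendsto (fun l => ν l (s l)ᶜ) atTop (𝓝 0) := by
      have heq : ∀ l, ν l (s l)ᶜ = 1 - ν l (s l) := by
        intro l
        have := hν l
        rw [measure_compl (hsm l) (measure_ne_top _ _), measure_univ]
      simp only [heq]
      have : Tendsto (fun l => (1 : ENNReal) - ν l (s l)) atTop (𝓝 (1 - 1)) :=
        ENNReal.Tendsto.sub tendsto_const_nhds hgood (Or.inl ENNReal.one_ne_top)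
      simpa using this
    have hsub : ∀ l, {x | ε ≤ ∑' j : ℕ, (2 : ℝ)⁻¹ ^ (j + 1) *
            |Real.exp (-((μ (A l)).toReal * (hitOrbit T (A l) (T^[τ l x] x) j : ℝ)))
              - Real.exp (-((μ (A l)).toReal * (hitOrbit T (A l) x j : ℝ)))|}
          ⊆ (s l)ᶜ ∪ {x | ε ≤ (μ (A l)).toReal * (τ l x : ℝ)} := by
      intro l x hx
      by_cases hgx : x ∈ s l
      · right
        have h1 := part1 μ T (A l) (τ l) x hgx
        simp only [Set.mem_setOf_eq] at hx ⊢
        calc ε ≤ _ := hx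
          _ ≤ (τ l x : ℝ) * (μ (A l)).toReal := h1
          _ = (μ (A l)).toReal * (τ l x : ℝ) := mul_comm _ _
      · exact Or.inl hgx
    have hup : Tendsto (fun l => ν l (s l)ᶜ + ν l {x | ε ≤ (μ (A l)).toReal * (τ l x : ℝ)})
        atTop (𝓝 0) := by
      have := Tendsto.add hcompl (hsmall ε hε)
      simpa using this
    apply tendsto_of_tendsto_of_tendsto_of_le_of_le tendsto_const_nhds hup
    · exact fun l => zero_le
    · intro l
      exact (measure_mono (hsub l)).trans (measure_union_le _ _)
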